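/- Let R' be a (0,1)-form and let L₁,…,L_a be pairwise non-proportional (1,0)-forms in R = k[x₀,x₁,y₀,y₁], and let n₁,…,n_a be positive integers. If F ∈ R is bihomogeneous of bidegree (c,d), F ∈ (L_s,R')^{n_s} for every s = 1,…,a, and c < n₁ + n₂ + ⋯ + n_a, then R' divides F. -/

import Mathlib

open MvPolynomial

/-- `F` is bihomogeneous of bidegree `(c, d)` in `k[x₀,x₁,y₀,y₁]`, where the variables are
indexed by `Fin 4` with `x₀ = X 0`, `x₁ = X 1`, `y₀ = X 2`, `y₁ = X 3`. -/
def IsBihom {k : Type*} [CommSemiring k] (c d : ℕ) (F : MvPolynomial (Fin 4) k) : Prop :=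
  ∀ s ∈ F.support, s 0 + s 1 = c ∧ s 2 + s 3 = d

/-- Two polynomials are non-proportional: neither is a scalar multiple of the other. -/
def NonPropPoly {k : Type*} [CommSemiring k] (F G : MvPolynomial (Fin 4) k) : Prop :=
  (∀ c : k, F ≠ c • G) ∧ (∀ c : k, G ≠ c • F)

section Helpers

variable {k : Type*} [Field k]

lemma eq_pair_of_support_subset {σ : Type*} [DecidableEq (σ →₀ ℕ)] (p : MvPolynomial σ k)
    (m₁ m₂ : σ →₀ ℕ) (hne : m₁ ≠ m₂) (h : p.support ⊆ {m₁, m₂}) :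
    p = monomial m₁ (coeff m₁ p) + monomial m₂ (coeff m₂ p) := by
  classical
  conv_lhs => rw [← p.support_sum_monomial_coeff,
    Finset.sum_subset h (fun x _ hx => by rw [notMem_support_iff.mp hx, monomial_zero]),
    Finset.sum_pair hne]

lemma IsBihom01_support {p : MvPolynomial (Fin 4) k} (h : ∀ s ∈ p.support, s 0 + s 1 = 0 ∧ s 2 + s 3 = 1) :
    p.support ⊆ {Finsupp.single 2 1, Finsupp.single 3 1} := by
  intro s hs
  obtain ⟨h1, h2⟩ := h s hs
  have h0 : s 0 = 0 := by omega
  have h1' : s 1 = 0 := by omega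
  simp only [Finset.mem_insert, Finset.mem_singleton]
  rcases Nat.add_eq_one_iff.mp h2 with ⟨ha, hb⟩ | ⟨ha, hb⟩
  · right
    ext i
    fin_cases i <;> simp_all [Finsupp.single_apply]
  · left
    ext i
    fin_cases i <;> simp_all [Finsupp.single_apply]

lemma form01_eq {p : MvPolynomial (Fin 4) k} (h : ∀ s ∈ p.support, s 0 + s 1 = 0 ∧ s 2 + s 3 = 1) :
    p = C (coeff (Finsupp.single 2 1) p) * X 2 + C (coeff (Finsupp.single 3 1) p) * X 3 := by
  have hne : (Finsupp.single 2 1 : Fin 4 →₀ ℕ) ≠ Finsupp.single 3 1 := by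
    intro hEq
    have := DFunLike.congr_fun hEq 2
    simp [Finsupp.single_apply] at this
  conv_lhs => rw [eq_pair_of_support_subset p _ _ hne (IsBihom01_support h),
    ← C_mul_X_pow_eq_monomial, ← C_mul_X_pow_eq_monomial, pow_one, pow_one]

lemma IsBihom10_support {p : MvPolynomial (Fin 4) k} (h : ∀ s ∈ p.support, s 0 + s 1 = 1 ∧ s 2 + s 3 = 0) :
    p.support ⊆ {Finsupp.single 0 1, Finsupp.single 1 1} := by
  intro s hs
  obtain ⟨h1, h2⟩ := h s hs
  have h2' : s 2 = 0 := by omega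
  have h3' : s 3 = 0 := by omega
  simp only [Finset.mem_insert, Finset.mem_singleton]
  rcases Nat.add_eq_one_iff.mp h1 with ⟨ha, hb⟩ | ⟨ha, hb⟩
  · right
    ext i
    fin_cases i <;> simp_all [Finsupp.single_apply]
  · left
    ext i
    fin_cases i <;> simp_all [Finsupp.single_apply]

lemma form10_eq {p : MvPolynomial (Fin 4) k} (h : ∀ s ∈ p.support, s 0 + s 1 = 1 ∧ s 2 + s 3 = 0) :
    p = C (coeff (Finsupp.single 0 1) p) * X 0 + C (coeff (Finsupp.single 1 1) p) * X 1 := by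
  have hne : (Finsupp.single 0 1 : Fin 4 →₀ ℕ) ≠ Finsupp.single 1 1 := by
    intro hEq
    have := DFunLike.congr_fun hEq 0
    simp [Finsupp.single_apply] at this
  conv_lhs => rw [eq_pair_of_support_subset p _ _ hne (IsBihom10_support h),
    ← C_mul_X_pow_eq_monomial, ← C_mul_X_pow_eq_monomial, pow_one, pow_one]

lemma prime_linear_aux {a b : k} (ha : a ≠ 0) :
    Prime (C a * X 0 + C b * X 1 : MvPolynomial (Fin 4) k) := by
  set e := MvPolynomial.finSuccEquiv k 3 with he
  set w : MvPolynomial (Fin 3) k := C (b / a) * X 0 with hw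
  have h1 : e (C a * X 0 + C b * X 1) = Polynomial.C (C a) * (Polynomial.X + Polynomial.C w) := by
    have hC : ∀ r : k, e (C r) = Polynomial.C (C r) := fun r => by
      simp [he, finSuccEquiv_apply]
    have hX1 : (X 1 : MvPolynomial (Fin 4) k) = X (Fin.succ 0) := rfl
    rw [map_add, map_mul, map_mul, finSuccEquiv_X_zero, hX1, finSuccEquiv_X_succ, hC, hC]
    have hba : a * (b / a) = b := by field_simp
    rw [hw, mul_add, ← Polynomial.C_mul, ← Polynomial.C_mul, ← mul_assoc, ← C_mul, hba]
  have hprime : Prime (Polynomial.X + Polynomial.C w) := by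
    have := Polynomial.prime_X_sub_C (-w)
    rwa [map_neg, sub_neg_eq_add] at this
  have hunit : IsUnit (Polynomial.C (C a : MvPolynomial (Fin 3) k)) := by
    exact (ha.isUnit.map (C : k →+* MvPolynomial (Fin 3) k)).map
      (Polynomial.C : MvPolynomial (Fin 3) k →+* _)
  have hassoc : Associated (Polynomial.X + Polynomial.C w) (e (C a * X 0 + C b * X 1)) := by
    rw [h1]
    exact (Associated.refl _).symm.trans ((associated_unit_mul_left _ _ hunit).symm)
  have : Prime (e (C a * X 0 + C b * X 1)) := hassoc.prime hprime
  exact (MulEquiv.prime_iff e).mp this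

lemma prime_linear {a b : k} (hab : a ≠ 0 ∨ b ≠ 0) :
    Prime (C a * X 0 + C b * X 1 : MvPolynomial (Fin 4) k) := by
  rcases hab with ha | hb
  · exact prime_linear_aux ha
  · have h := prime_linear_aux (k := k) hb (b := a)
    set τ := renameEquiv k (Equiv.swap (0 : Fin 4) 1) with hτ
    have h2 : Prime (τ.toMulEquiv (C b * X 0 + C a * X 1)) := (MulEquiv.prime_iff τ.toMulEquiv).mpr (by simpa using h)
    have h3 : τ.toMulEquiv (C b * X 0 + C a * X 1) = C a * X 0 + C b * X 1 := by
      show τ (C b * X 0 + C a * X 1) = _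
      rw [hτ]
      simp only [renameEquiv_apply, map_add, map_mul, rename_C, rename_X,
        Equiv.swap_apply_left, Equiv.swap_apply_right]
      ring
    rwa [h3] at h2

lemma hom_degree_le_of_dvd {σ : Type*} {P G : MvPolynomial σ k} {m c : ℕ}
    (hP : P.IsHomogeneous m) (hG : G.IsHomogeneous c) (hG0 : G ≠ 0) (hdvd : P ∣ G) :
    m ≤ c := by
  classical
  obtain ⟨Q, rfl⟩ := hdvd
  have hP0 : P ≠ 0 := fun h => hG0 (by rw [h, zero_mul])
  have hQ0 : Q ≠ 0 := fun h => hG0 (by rw [h, mul_zero])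
  -- find a nonzero homogeneous component of Q
  obtain ⟨j, hjr, hj⟩ : ∃ j ∈ Finset.range (Q.totalDegree + 1), homogeneousComponent j Q ≠ 0 := by
    by_contra hcon
    push_neg at hcon
    apply hQ0
    rw [← Q.sum_homogeneousComponent]
    exact Finset.sum_eq_zero hcon
  have key : homogeneousComponent (m + j) (P * Q) = P * homogeneousComponent j Q := by
    conv_lhs => rw [show P * Q = ∑ i ∈ Finset.range (Q.totalDegree + 1),
      P * homogeneousComponent i Q by rw [← Finset.mul_sum, Q.sum_homogeneousComponent]]
    rw [map_sum]
    rw [Finset.sum_eq_single_of_mem j hjr]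
    · rw [homogeneousComponent_of_mem
        ((mem_homogeneousSubmodule _ _).mpr (hP.mul (homogeneousComponent_isHomogeneous j Q)))]
      simp
    · intro i _ hij
      rw [homogeneousComponent_of_mem
        ((mem_homogeneousSubmodule _ _).mpr (hP.mul (homogeneousComponent_isHomogeneous i Q)))]
      simp [Nat.add_left_cancel_iff, hij, Ne.symm hij]
  have hne : P * homogeneousComponent j Q ≠ 0 := mul_ne_zero hP0 hj
  by_contra hmc
  push_neg at hmc
  have : homogeneousComponent (m + j) (P * Q) = 0 := by
    rw [homogeneousComponent_of_mem ((mem_homogeneousSubmodule _ _).mpr hG)]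
    simp only [ite_eq_right_iff]
    intro h
    omega
  exact hne (by rw [← key, this])

lemma prod_pow_dvd_of_prime {α : Type*} [CommMonoidWithZero α] [IsCancelMulZero α] [DecompositionMonoid α]
    {ι : Type*} [DecidableEq ι] (t : Finset ι) (ℓ : ι → α) (n : ι → ℕ) (G : α)
    (hp : ∀ s, Prime (ℓ s)) (hnd : ∀ s t, s ≠ t → ¬ ℓ s ∣ ℓ t)
    (hdvd : ∀ s, ℓ s ^ n s ∣ G) :
    (∏ s ∈ t, ℓ s ^ n s) ∣ G := by
  classical
  induction t using Finset.induction_on with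
  | empty => simpa using one_dvd G
  | insert j t' hjt ih =>
    rw [Finset.prod_insert hjt]
    have hrel : IsRelPrime (ℓ j ^ n j) (∏ s ∈ t', ℓ s ^ n s) := by
      apply IsRelPrime.prod_right
      intro i hi
      have hij : j ≠ i := fun h => hjt (h ▸ hi)
      exact (((hp j).irreducible.isRelPrime_iff_not_dvd).mpr (hnd j i hij)).pow
    exact hrel.mul_dvd (hdvd j) ih

lemma lemE {d : ℕ} {α β u v : k} (hβ : β ≠ 0) (hu : u ≠ 0) (huv : α * u + β * v = 0)
    (F : MvPolynomial (Fin 4) k) (hFy : ∀ s ∈ F.support, s 2 + s 3 = d)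
    (h0 : aeval ![X 0, X 1, C u, C v] F = (0 : MvPolynomial (Fin 4) k)) :
    (C α * X 2 + C β * X 3) ∣ F := by
  classical
  have hv : v = -(α / β) * u := by
    field_simp
    linear_combination huv
  -- transfer h0 to a Fin 3 target
  have hw0 : aeval ![X 2, X 0, C u, C v] F = (0 : MvPolynomial (Fin 3) k) := by
    have h1 : (aeval (![X 2, X 0, X 1, X 1] : Fin 4 → MvPolynomial (Fin 3) k)).comp
        (aeval ![X 0, X 1, C u, C v]) F = aeval ![X 2, X 0, C u, C v] F := by
      have hfun : (fun i => aeval (![X 2, X 0, X 1, X 1] : Fin 4 → MvPolynomial (Fin 3) k)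
          ((![X 0, X 1, C u, C v] : Fin 4 → MvPolynomial (Fin 4) k) i))
          = ![X 2, X 0, C u, C v] := by
        funext i
        fin_cases i <;> simp
      rw [comp_aeval, hfun]
    rw [← h1, AlgHom.comp_apply, h0, map_zero]
  -- the substitution y₁ ↦ -(α/β) y₀ (after reindexing) kills F
  have key : aeval (![X 2, X 0, X 1, C (-(α/β)) * X 1] : Fin 4 → MvPolynomial (Fin 3) k) F
      = C (u⁻¹ ^ d) * X 1 ^ d * aeval (![X 2, X 0, C u, C v] : Fin 4 → MvPolynomial (Fin 3) k) F := by
    conv_lhs => rw [← F.support_sum_monomial_coeff]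
    conv_rhs => rw [← F.support_sum_monomial_coeff]
    rw [map_sum, map_sum, Finset.mul_sum]
    refine Finset.sum_congr rfl fun s hs => ?_
    have hd : s 2 + s 3 = d := hFy s hs
    have hscal : u⁻¹ ^ (s 2 + s 3) * (u ^ (s 2) * v ^ (s 3)) = (-(α/β)) ^ (s 3) := by
      rw [hv, mul_pow, pow_add]
      field_simp
      rw [div_pow, div_pow]; field_simp; simp
    rw [aeval_monomial, aeval_monomial, Finsupp.prod_fintype _ _ (fun i => pow_zero _),
      Finsupp.prod_fintype _ _ (fun i => pow_zero _), Fin.prod_univ_four, Fin.prod_univ_four]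
    simp only [Matrix.cons_val_zero, Matrix.cons_val_one, Matrix.head_cons,
      Matrix.cons_val_two, Matrix.tail_cons, Matrix.cons_val_three, Matrix.head_fin_const]
    rw [mul_pow, ← map_pow, ← map_pow, ← map_pow, ← hd, ← hscal, pow_add]
    simp only [algebraMap_eq, C_mul]
    ring
  have hψ0 : aeval (![X 2, X 0, X 1, C (-(α/β)) * X 1] : Fin 4 → MvPolynomial (Fin 3) k) F = 0 := by
    rw [key, hw0, mul_zero]
  set e := MvPolynomial.finSuccEquiv k 3 with he
  set r : MvPolynomial (Fin 3) k := C (-(α/β)) * X 1 with hr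
  set sw : Fin 4 → Fin 4 := ⇑(Equiv.swap (0 : Fin 4) 3) with hsw
  have heC : ∀ q : k, e (C q) = Polynomial.C (C q) := fun q => by
    simp [he, finSuccEquiv_apply]
  have heX0 : e (X 0) = Polynomial.X := finSuccEquiv_X_zero
  have heX1 : e (X 1) = Polynomial.C (X 0) := by
    have : (X 1 : MvPolynomial (Fin 4) k) = X (Fin.succ 0) := rfl
    rw [this, finSuccEquiv_X_succ]
  have heX2 : e (X 2) = Polynomial.C (X 1) := by
    have : (X 2 : MvPolynomial (Fin 4) k) = X (Fin.succ 1) := rfl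
    rw [this, finSuccEquiv_X_succ]
  have heX3 : e (X 3) = Polynomial.C (X 2) := by
    have : (X 3 : MvPolynomial (Fin 4) k) = X (Fin.succ 2) := rfl
    rw [this, finSuccEquiv_X_succ]
  have hsw0 : sw 0 = 3 := Equiv.swap_apply_left _ _
  have hsw1 : sw 1 = 1 := Equiv.swap_apply_of_ne_of_ne (by decide) (by decide)
  have hsw2 : sw 2 = 2 := Equiv.swap_apply_of_ne_of_ne (by decide) (by decide)
  have hsw3 : sw 3 = 0 := Equiv.swap_apply_right _ _
  have hcomp : (Polynomial.evalRingHom r).comp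
      ((e : MvPolynomial (Fin 4) k →+* Polynomial (MvPolynomial (Fin 3) k)).comp
        (rename sw).toRingHom)
      = (aeval (![X 2, X 0, X 1, C (-(α/β)) * X 1] : Fin 4 → MvPolynomial (Fin 3) k)).toRingHom := by
    apply MvPolynomial.ringHom_ext
    · intro q
      simp [heC]
    · intro i
      fin_cases i <;>
        simp [hsw0, hsw1, hsw2, hsw3, heX0, heX1, heX2, heX3, hr]
  have hroot : (Polynomial.X - Polynomial.C r) ∣ e (rename sw F) := by
    rw [Polynomial.dvd_iff_isRoot]
    have := DFunLike.congr_fun hcomp F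
    simp only [RingHom.coe_comp, Function.comp_apply, RingHom.coe_coe, AlgHom.toRingHom_eq_coe,
      AlgHom.coe_toRingHom, Polynomial.coe_evalRingHom] at this
    exact this.trans hψ0
  have hαβ : β * (α / β) = α := by field_simp
  have himg : e (rename sw (C α * X 2 + C β * X 3))
      = Polynomial.C (C β) * (Polynomial.X - Polynomial.C r) := by
    rw [map_add, map_mul, map_mul, rename_C, rename_C, rename_X, rename_X, hsw2, hsw3,
      map_add, map_mul, map_mul, heC, heC, heX2, heX0]
    rw [mul_sub, ← Polynomial.C_mul, ← Polynomial.C_mul, hr, ← mul_assoc, ← C_mul]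
    rw [mul_neg, hαβ]
    have hX1α : (C (-α) : MvPolynomial (Fin 3) k) * X 1 = -(C α * X 1) := by
      rw [map_neg, neg_mul]
    rw [hX1α, map_neg, sub_neg_eq_add]
    ring
  have hunit : IsUnit (Polynomial.C (C β : MvPolynomial (Fin 3) k)) :=
    (hβ.isUnit.map (C : k →+* MvPolynomial (Fin 3) k)).map
      (Polynomial.C : MvPolynomial (Fin 3) k →+* _)
  have hdvd2 : e (rename sw (C α * X 2 + C β * X 3)) ∣ e (rename sw F) := by
    rw [himg]
    exact (associated_unit_mul_left _ _ hunit).dvd.trans hroot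
  have hdvd3 : rename sw (C α * X 2 + C β * X 3) ∣ rename sw F := by
    have := map_dvd (e.symm : Polynomial (MvPolynomial (Fin 3) k) →+* MvPolynomial (Fin 4) k) hdvd2
    simpa using this
  have hdvd4 := map_dvd (rename sw : MvPolynomial (Fin 4) k →ₐ[k] MvPolynomial (Fin 4) k) hdvd3
  have hinv : ∀ p : MvPolynomial (Fin 4) k, rename sw (rename sw p) = p := by
    intro p
    rw [rename_rename]
    have : sw ∘ sw = id := by
      funext i
      simp [hsw, Equiv.swap_apply_self]
    rw [this, rename_id_apply]
  rw [hinv, hinv] at hdvd4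
  exact hdvd4


end Helpers

/-- **Bigraded Bezout with multiplicities against a `(0,1)`-line.**  Let `R'` be a
`(0,1)`-form and `L₁, …, L_a` pairwise non-proportional `(1,0)`-forms, and let
`n₁, …, n_a` be positive integers.  If `F` is bihomogeneous of bidegree `(c, d)`,
`F ∈ (L_s, R')^(n_s)` for every `s`, and `c < n₁ + ⋯ + n_a`, then `R'` divides `F`. -/
theorem bezout_against_vertical_line {k : Type*} [Field k] [IsAlgClosed k] [CharZero k]
    (a : ℕ) (R' : MvPolynomial (Fin 4) k) (hR0 : R' ≠ 0) (hRdeg : IsBihom 0 1 R')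
    (L : Fin a → MvPolynomial (Fin 4) k)
    (hL0 : ∀ s, L s ≠ 0) (hLdeg : ∀ s, IsBihom 1 0 (L s))
    (hLnp : ∀ s t, s ≠ t → NonPropPoly (L s) (L t))
    (n : Fin a → ℕ) (hn : ∀ s, 1 ≤ n s)
    (c d : ℕ) (F : MvPolynomial (Fin 4) k) (hF : IsBihom c d F)
    (hmem : ∀ s, F ∈ (Ideal.span {L s, R'}) ^ n s)
    (hc : c < ∑ s, n s) :
    R' ∣ F := by
  classical
  set α := coeff (Finsupp.single 2 1) R' with hα
  set β := coeff (Finsupp.single 3 1) R' with hβdef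
  have hR'eq : R' = C α * X 2 + C β * X 3 := form01_eq hRdeg
  have hαβ : α ≠ 0 ∨ β ≠ 0 := by
    by_contra hcon
    push_neg at hcon
    exact hR0 (by rw [hR'eq, hcon.1, hcon.2, map_zero, zero_mul, zero_mul, add_zero])
  set A : Fin a → k := fun s => coeff (Finsupp.single 0 1) (L s) with hA
  set B : Fin a → k := fun s => coeff (Finsupp.single 1 1) (L s) with hB
  have hLeq : ∀ s, L s = C (A s) * X 0 + C (B s) * X 1 := fun s => form10_eq (hLdeg s)
  have hab : ∀ s, A s ≠ 0 ∨ B s ≠ 0 := by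
    intro s
    by_contra hcon
    push_neg at hcon
    exact hL0 s (by rw [hLeq s, hcon.1, hcon.2, map_zero, zero_mul, zero_mul, add_zero])
  set φ : MvPolynomial (Fin 4) k →ₐ[k] MvPolynomial (Fin 4) k :=
    aeval ![X 0, X 1, C β, C (-α)] with hφ
  have hφR' : φ R' = 0 := by
    rw [hR'eq]
    simp only [hφ, map_add, map_mul, aeval_C, aeval_X, algebraMap_eq,
      Matrix.cons_val_two, Matrix.tail_cons, Matrix.head_cons, Matrix.cons_val_three]
    rw [← C_mul, ← C_mul, ← C_add, show α * β + β * -α = 0 by ring, map_zero]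
  have hφL : ∀ s, φ (L s) = L s := by
    intro s
    rw [hLeq s]
    simp only [hφ, map_add, map_mul, aeval_C, aeval_X, algebraMap_eq,
      Matrix.cons_val_zero, Matrix.cons_val_one, Matrix.head_cons]
  have hdvd : ∀ s, (L s) ^ n s ∣ φ F := by
    intro s
    have h1 : φ F ∈ Ideal.map (φ : MvPolynomial (Fin 4) k →+* MvPolynomial (Fin 4) k)
        ((Ideal.span {L s, R'}) ^ n s) := Ideal.mem_map_of_mem _ (hmem s)
    rw [Ideal.map_pow, Ideal.map_span] at h1
    have himg : (φ : MvPolynomial (Fin 4) k →+* MvPolynomial (Fin 4) k) '' {L s, R'}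
        = {L s, 0} := by
      rw [Set.image_pair]
      simp only [RingHom.coe_coe, hφL s, hφR']
    rw [himg] at h1
    have hle : Ideal.span ({L s, 0} : Set (MvPolynomial (Fin 4) k)) ≤ Ideal.span {L s} := by
      rw [Ideal.span_le]
      intro x hx
      rcases hx with h | h
      · exact h ▸ Ideal.subset_span rfl
      · rw [Set.mem_singleton_iff] at h
        simp [h]
    have h2 : φ F ∈ (Ideal.span {L s}) ^ n s :=
      Ideal.pow_right_mono hle (n s) h1
    rwa [Ideal.span_singleton_pow, Ideal.mem_span_singleton] at h2
  by_cases hφF : φ F = 0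
  · rcases em (β ≠ 0) with hβ | hβ0
    · have := lemE (d := d) hβ hβ (by ring : α * β + β * (-α) = 0) F
        (fun s hs => (hF s hs).2) ?_
      · rwa [← hR'eq] at this
      · have : φ F = aeval ![X 0, X 1, C β, C (-α)] F := rfl
        rwa [this] at hφF
    · push_neg at hβ0
      have hα0 : α ≠ 0 := by tauto
      set sw : Fin 4 → Fin 4 := ⇑(Equiv.swap (2 : Fin 4) 3) with hsw
      have hsw2 : sw 2 = 3 := Equiv.swap_apply_left _ _
      have hsw3 : sw 3 = 2 := Equiv.swap_apply_right _ _
      have hsw0 : sw 0 = 0 := Equiv.swap_apply_of_ne_of_ne (by decide) (by decide)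
      have hsw1 : sw 1 = 1 := Equiv.swap_apply_of_ne_of_ne (by decide) (by decide)
      have hFy' : ∀ m ∈ (rename sw F).support, m 2 + m 3 = d := by
        intro m hm
        rw [support_rename_of_injective (Equiv.injective _)] at hm
        obtain ⟨m', hm', rfl⟩ := Finset.mem_image.mp hm
        have h2 : Finsupp.mapDomain sw m' 2 = m' 3 := by
          rw [← hsw3, Finsupp.mapDomain_apply (Equiv.injective _)]
        have h3 : Finsupp.mapDomain sw m' 3 = m' 2 := by
          rw [← hsw2, Finsupp.mapDomain_apply (Equiv.injective _)]
        rw [h2, h3, add_comm]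
        exact (hF m' hm').2
      have h0' : aeval ![X 0, X 1, C (-α), C β] (rename sw F) = (0 : MvPolynomial (Fin 4) k) := by
        rw [aeval_rename]
        have hfun : (![X 0, X 1, C (-α), C β] : Fin 4 → MvPolynomial (Fin 4) k) ∘ sw
            = ![X 0, X 1, C β, C (-α)] := by
          funext i
          fin_cases i <;>
            simp [Function.comp_apply, hsw0, hsw1, hsw2, hsw3]
        rw [hfun]
        exact hφF
      have hdv := lemE (d := d) hα0 (neg_ne_zero.mpr hα0)
        (by ring : β * (-α) + α * β = 0) (rename sw F) hFy' h0'
      have hdv2 := map_dvd (rename sw : MvPolynomial (Fin 4) k →ₐ[k] MvPolynomial (Fin 4) k) hdv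
      have hinv : rename sw (rename sw F) = F := by
        rw [rename_rename]
        have : sw ∘ sw = id := by
          funext i
          simp [hsw, Equiv.swap_apply_self]
        rw [this, rename_id_apply]
      have himg2 : rename sw (C β * X 2 + C α * X 3) = C α * X 2 + C β * X 3 := by
        rw [map_add, map_mul, map_mul, rename_C, rename_C, rename_X, rename_X, hsw2, hsw3]
        ring
      rw [hinv, himg2, ← hR'eq] at hdv2
      exact hdv2
  · exfalso
    have hprime : ∀ s, Prime (L s) := by
      intro s
      rw [hLeq s]
      exact prime_linear (hab s)
    have hnd : ∀ s t, s ≠ t → ¬ L s ∣ L t := by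
      intro s t hst hdvdst
      have hev : ∀ p : MvPolynomial (Fin 4) k, ∀ q, p ∣ q →
          eval ![B s, -(A s), 0, 0] p = 0 → eval ![B s, -(A s), 0, 0] q = 0 := by
        intro p q ⟨w, hw⟩ hp
        rw [hw, map_mul, hp, zero_mul]
      have hps : eval ![B s, -(A s), 0, 0] (L s) = 0 := by
        rw [hLeq s]
        simp only [map_add, map_mul, eval_C, eval_X, Matrix.cons_val_zero,
          Matrix.cons_val_one, Matrix.head_cons]
        ring
      have hpt : eval ![B s, -(A s), 0, 0] (L t) = 0 := hev _ _ hdvdst hps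
      rw [hLeq t] at hpt
      simp only [map_add, map_mul, eval_C, eval_X, Matrix.cons_val_zero,
        Matrix.cons_val_one, Matrix.head_cons] at hpt
      have hdet : A t * B s = B t * A s := by linear_combination hpt
      rcases hab s with has | hbs
      · have : L t = (A t / A s) • L s := by
          rw [smul_eq_C_mul, hLeq s, hLeq t, mul_add, ← mul_assoc, ← mul_assoc,
            ← C_mul, ← C_mul]
          have e1 : A t / A s * A s = A t := div_mul_cancel₀ _ has
          have e2 : A t / A s * B s = B t := by
            field_simp
            linear_combination hdet
          rw [e1, e2]
        exact (hLnp s t hst).2 _ this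
      · have : L t = (B t / B s) • L s := by
          rw [smul_eq_C_mul, hLeq s, hLeq t, mul_add, ← mul_assoc, ← mul_assoc,
            ← C_mul, ← C_mul]
          have e1 : B t / B s * B s = B t := div_mul_cancel₀ _ hbs
          have e2 : B t / B s * A s = A t := by
            field_simp
            linear_combination -hdet
          rw [e1, e2]
        exact (hLnp s t hst).2 _ this
    have hProd : (∏ s, L s ^ n s) ∣ φ F :=
      prod_pow_dvd_of_prime Finset.univ L n (φ F) hprime hnd hdvd
    have hLhom : ∀ s, (L s).IsHomogeneous 1 := by
      intro s
      rw [hLeq s]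
      have h0 : ((C (A s) : MvPolynomial (Fin 4) k) * X 0).IsHomogeneous 1 :=
        (isHomogeneous_X _ _).C_mul _
      have h1 : ((C (B s) : MvPolynomial (Fin 4) k) * X 1).IsHomogeneous 1 :=
        (isHomogeneous_X _ _).C_mul _
      exact h0.add h1
    have hPhom : (∏ s, L s ^ n s).IsHomogeneous (∑ s, n s) := by
      have := IsHomogeneous.prod Finset.univ (fun s => L s ^ n s) (fun s => n s)
        (fun s _ => by simpa using (hLhom s).pow (n s))
      simpa using this
    have hφFhom : (φ F).IsHomogeneous c := by
      have hrw : φ F = ∑ s ∈ F.support, φ (monomial s (coeff s F)) := by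
        rw [← map_sum, F.support_sum_monomial_coeff]
      rw [hrw]
      apply IsHomogeneous.sum
      intro s hs
      have hc' : s 0 + s 1 = c := (hF s hs).1
      rw [hφ, aeval_monomial, Finsupp.prod_fintype _ _ (fun i => pow_zero _),
        Fin.prod_univ_four]
      simp only [Matrix.cons_val_zero, Matrix.cons_val_one, Matrix.head_cons,
        Matrix.cons_val_two, Matrix.tail_cons, Matrix.cons_val_three]
      rw [algebraMap_eq, ← map_pow, ← map_pow]
      have hshape : (C (coeff s F) : MvPolynomial (Fin 4) k) *
          (X 0 ^ s 0 * X 1 ^ s 1 * C (β ^ s 2) * C ((-α) ^ s 3))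
          = C (coeff s F * β ^ s 2 * (-α) ^ s 3) * (X 0 ^ s 0 * X 1 ^ s 1) := by
        rw [C_mul, C_mul]
        ring
      rw [hshape]
      have hX01 : ((X 0 : MvPolynomial (Fin 4) k) ^ s 0 * X 1 ^ s 1).IsHomogeneous (s 0 + s 1) := by
        have := ((isHomogeneous_X k (0 : Fin 4)).pow (s 0)).mul
          ((isHomogeneous_X k (1 : Fin 4)).pow (s 1))
        simpa using this
      exact (hc' ▸ hX01).C_mul _
    have hle := hom_degree_le_of_dvd hPhom hφFhom hφF hProd
    omega
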